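/- Let k ≥ 3 be an odd integer and let D be a k-quasi-transitive digraph. If v is a (k+2)-king of D and u is a vertex with d(v,u) = k+2, then u is a 4-king of D. Moreover, for every vertex w with d(u,w) = 4 one has d(v,w) = k+2, and w is also a 4-king of D. -/

import Mathlib

variable {V : Type*}

/-- A directed path of length `n` from `u` to `v` in the digraph with arc relation `A`:
a sequence of `n + 1` pairwise distinct vertices, consecutive ones joined by arcs. -/
def HasPathN (A : V → V → Prop) (u v : V) (n : ℕ) : Prop :=
  ∃ f : Fin (n + 1) → V, Function.Injective f ∧ f 0 = u ∧ f (Fin.last n) = v ∧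
    ∀ i : Fin n, A (f i.castSucc) (f i.succ)

/-- The distance from `u` to `v`: the length of a shortest directed path from `u` to `v`,
`⊤` if there is no such path. -/
noncomputable def ddist (A : V → V → Prop) (u v : V) : ℕ∞ :=
  sInf {n : ℕ∞ | ∃ m : ℕ, n = (m : ℕ∞) ∧ HasPathN A u v m}

/-- `D` is `k`-quasi-transitive if for every directed path `(v_0, …, v_k)` of length `k`,
either `(v_0, v_k)` or `(v_k, v_0)` is an arc. -/
def KQuasiTrans (A : V → V → Prop) (k : ℕ) : Prop :=
  ∀ u v : V, HasPathN A u v k → A u v ∨ A v u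

/-- A vertex `v` is an `r`-king if every vertex is within distance `r` from `v`. -/
def IsRKing (A : V → V → Prop) (r : ℕ) (v : V) : Prop :=
  ∀ u : V, ddist A v u ≤ (r : ℕ∞)

/-- `u` reaches `v` by a directed path. -/
def Reaches (A : V → V → Prop) (u v : V) : Prop :=
  ∃ n : ℕ, HasPathN A u v n

/-- A strong component: the set of all vertices mutually reachable with some vertex. -/
def IsStrongComponent (A : V → V → Prop) (S : Set V) : Prop :=
  ∃ v : V, S = {u | Reaches A u v ∧ Reaches A v u}

/-- An initial strong component: a strong component receiving no arcs from outside. -/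
def IsInitialStrongComponent (A : V → V → Prop) (S : Set V) : Prop :=
  IsStrongComponent A S ∧ ∀ u v : V, u ∉ S → v ∈ S → ¬ A u v

/-- The out-degree of `v` in `D`. -/
noncomputable def outDeg (A : V → V → Prop) (v : V) : ℕ :=
  {u : V | A v u}.ncard

/-- The out-degree of `v` in the subdigraph of `D` induced by `C`. -/
noncomputable def outDegIn (A : V → V → Prop) (C : Set V) (v : V) : ℕ :=
  {u ∈ C | A v u}.ncard

/-- The maximum out-degree of the subdigraph induced by `C`. -/
noncomputable def maxOutDegIn (A : V → V → Prop) (C : Set V) : ℕ :=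
  sSup (outDegIn A C '' C)

section Infra

lemma hasPathN_of_fn (A : V → V → Prop) (g : ℕ → V) (n : ℕ)
    (harc : ∀ i < n, A (g i) (g (i+1)))
    (hinj : ∀ i ≤ n, ∀ j ≤ n, g i = g j → i = j) :
    HasPathN A (g 0) (g n) n := by
  refine ⟨fun i => g i.1, ?_, rfl, rfl, ?_⟩
  · intro i j h
    exact Fin.ext (hinj i.1 (by omega) j.1 (by omega) h)
  · intro i
    exact harc i.1 i.2

lemma exists_small_mem {S : Set ℕ∞} {n : ℕ} (h : sInf S ≤ (n : ℕ∞)) :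
    ∃ s ∈ S, s ≤ (n : ℕ∞) := by
  by_contra hc
  push_neg at hc
  have h2 : (n : ℕ∞) + 1 ≤ sInf S := le_sInf (fun s hs => Order.add_one_le_of_lt (hc s hs))
  have h3 : (n : ℕ∞) < (n : ℕ∞) + 1 := by
    exact_mod_cast Nat.lt_succ_self n
  exact absurd (h2.trans h) (not_le.mpr h3)

lemma ddist_spec (A : V → V → Prop) {a b : V} {m : ℕ} (h : ddist A a b = (m : ℕ∞)) :
    HasPathN A a b m := by
  have hle : sInf {n : ℕ∞ | ∃ m : ℕ, n = (m : ℕ∞) ∧ HasPathN A a b m} ≤ (m : ℕ∞) := le_of_eq h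
  obtain ⟨s, hs, hsle⟩ := exists_small_mem hle
  obtain ⟨m', rfl, hp⟩ := hs
  have h1 : ddist A a b ≤ (m' : ℕ∞) := sInf_le ⟨m', rfl, hp⟩
  rw [h] at h1
  have : m' = m := le_antisymm (by exact_mod_cast hsle) (by exact_mod_cast h1)
  rwa [this] at hp

lemma exists_dist_of_le (A : V → V → Prop) {a b : V} {n : ℕ} (h : ddist A a b ≤ (n : ℕ∞)) :
    ∃ m ≤ n, ddist A a b = (m : ℕ∞) := by
  have h' := h
  rw [ddist] at h'
  obtain ⟨s, hs, hsle⟩ := exists_small_mem h'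
  obtain ⟨m', rfl, hp⟩ := hs
  have h1 : ddist A a b ≤ (m' : ℕ∞) := sInf_le ⟨m', rfl, hp⟩
  obtain ⟨m, he, hm⟩ := (WithTop.le_coe_iff).mp h1
  refine ⟨m, ?_, he⟩
  have hm' : m' ≤ n := by exact_mod_cast hsle
  omega

lemma fn_of_hasPathN {A : V → V → Prop} {a b : V} {n : ℕ} (h : HasPathN A a b n) :
    ∃ g : ℕ → V, g 0 = a ∧ g n = b ∧ (∀ i < n, A (g i) (g (i+1))) ∧
      (∀ i ≤ n, ∀ j ≤ n, g i = g j → i = j) := by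
  obtain ⟨f, hinj, h0, hl, harc⟩ := h
  refine ⟨fun t => f ⟨min t n, by omega⟩, ?_, ?_, ?_, ?_⟩
  · show f ⟨min 0 n, by omega⟩ = a
    rw [← h0]; congr 1
  · show f ⟨min n n, by omega⟩ = b
    rw [← hl]; congr 1; exact Fin.ext (by simp [Fin.last])
  · intro i hi
    show A (f ⟨min i n, by omega⟩) (f ⟨min (i+1) n, by omega⟩)
    have := harc ⟨i, hi⟩
    convert this using 2
    · exact Fin.ext (by simp [Fin.castSucc]; omega)
    · exact Fin.ext (by simp [Fin.succ]; omega)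
  · intro i hi j hj he
    have h2 : f ⟨min i n, by omega⟩ = f ⟨min j n, by omega⟩ := he
    have h3 := hinj h2
    simp only [Fin.mk.injEq] at h3
    omega

lemma ddist_le_of_fn (A : V → V → Prop) (g : ℕ → V) (n : ℕ)
    (harc : ∀ i < n, A (g i) (g (i+1))) :
    ddist A (g 0) (g n) ≤ (n : ℕ∞) := by
  induction n using Nat.strong_induction_on generalizing g with
  | _ n IH =>
    by_cases hinj : ∀ i ≤ n, ∀ j ≤ n, g i = g j → i = j
    · exact sInf_le ⟨n, rfl, hasPathN_of_fn A g n harc hinj⟩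
    · push_neg at hinj
      obtain ⟨i, hi, j, hj, hgij, hne⟩ := hinj
      set a := min i j with ha
      set b := max i j with hb
      have hab : a < b := by omega
      have hbn : b ≤ n := by omega
      have hgab : g a = g b := by
        rcases le_total i j with h | h
        · rw [ha, hb, min_eq_left h, max_eq_right h]; exact hgij
        · rw [ha, hb, min_eq_right h, max_eq_left h]; exact hgij.symm
      set n' := n - (b - a) with hn'
      set g' : ℕ → V := fun s => if s ≤ a then g s else g (s + (b - a)) with hg'
      have harc' : ∀ s < n', A (g' s) (g' (s+1)) := by
        intro s hs
        rcases lt_trichotomy s a with h | h | h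
        · have e1 : g' s = g s := by simp only [hg']; rw [if_pos (by omega)]
          have e2 : g' (s+1) = g (s+1) := by simp only [hg']; rw [if_pos (by omega)]
          rw [e1, e2]; exact harc s (by omega)
        · have e1 : g' s = g b := by simp only [hg']; rw [if_pos (by omega)]; rw [h, hgab]
          have e2 : g' (s+1) = g (b+1) := by
            simp only [hg']; rw [if_neg (by omega)]
            congr 1; omega
          rw [e1, e2]; exact harc b (by omega)
        · have e1 : g' s = g (s + (b-a)) := by simp only [hg']; rw [if_neg (by omega)]
          have e2 : g' (s+1) = g (s + (b-a) + 1) := by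
            simp only [hg']; rw [if_neg (by omega)]; congr 1; omega
          rw [e1, e2]; exact harc (s + (b-a)) (by omega)
      have h0 : g' 0 = g 0 := by simp only [hg']; rw [if_pos (by omega)]
      have hend : g' n' = g n := by
        simp only [hg']
        rcases le_or_gt n' a with h | h
        · rw [if_pos h]
          have : n' = a ∧ b = n := by omega
          rw [this.1, hgab, this.2]
        · rw [if_neg (by omega)]; congr 1; omega
      have := IH n' (by omega) g' harc'
      rw [h0, hend] at this
      exact this.trans (by exact_mod_cast (by omega : n' ≤ n))

lemma ddist_le_one (A : V → V → Prop) {a b : V} (h : A a b) :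
    ddist A a b ≤ ((1 : ℕ) : ℕ∞) := by
  have := ddist_le_of_fn A (fun s => if s = 0 then a else b) 1 (by
    intro i hi
    have e : i = 0 := by omega
    subst e
    show A (if (0:ℕ) = 0 then a else b) (if (1:ℕ) = 0 then a else b)
    rw [if_pos rfl, if_neg one_ne_zero]
    exact h)
  have e0 : (if (0:ℕ) = 0 then a else b) = a := by rw [if_pos rfl]
  have e1 : (if (1:ℕ) = 0 then a else b) = b := by rw [if_neg one_ne_zero]
  beta_reduce at this
  rw [e0, e1] at this
  exact this

lemma ddist_seg (A : V → V → Prop) (g : ℕ → V) (N : ℕ)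
    (harc : ∀ i < N, A (g i) (g (i+1))) :
    ∀ a b, a ≤ b → b ≤ N → ddist A (g a) (g b) ≤ ((b - a : ℕ) : ℕ∞) := by
  intro a b hab hb
  have h := ddist_le_of_fn A (fun s => g (a + s)) (b - a) (fun i hi => by
    show A (g (a+i)) (g (a+(i+1)))
    have e : a+(i+1) = (a+i)+1 := by omega
    rw [e]; exact harc _ (by omega))
  have e0 : a + 0 = a := rfl
  have e1 : a + (b-a) = b := by omega
  beta_reduce at h
  rw [e0, e1] at h
  exact h

lemma ddist_trans (A : V → V → Prop) {a b c : V} {m n : ℕ}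
    (h1 : ddist A a b ≤ (m : ℕ∞)) (h2 : ddist A b c ≤ (n : ℕ∞)) :
    ddist A a c ≤ ((m + n : ℕ) : ℕ∞) := by
  obtain ⟨m', hm', he1⟩ := exists_dist_of_le A h1
  obtain ⟨n', hn', he2⟩ := exists_dist_of_le A h2
  obtain ⟨g1, hg10, hg1e, hg1arc, -⟩ := fn_of_hasPathN (ddist_spec A he1)
  obtain ⟨g2, hg20, hg2e, hg2arc, -⟩ := fn_of_hasPathN (ddist_spec A he2)
  have h := ddist_le_of_fn A (fun s => if s ≤ m' then g1 s else g2 (s - m')) (m' + n') (by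
    intro i hi
    rcases lt_trichotomy i m' with h | h | h
    · show A (if i ≤ m' then g1 i else _) (if i+1 ≤ m' then g1 (i+1) else _)
      rw [if_pos (by omega), if_pos (by omega)]
      exact hg1arc i (by omega)
    · subst h
      show A (if i ≤ i then g1 i else _) (if i+1 ≤ i then _ else g2 (i+1-i))
      rw [if_pos le_rfl, if_neg (by omega)]
      have e : i + 1 - i = 0 + 1 := by omega
      rw [e, hg1e, ← hg20]
      exact hg2arc 0 (by omega)
    · show A (if i ≤ m' then _ else g2 (i - m')) (if i+1 ≤ m' then _ else g2 (i+1-m'))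
      rw [if_neg (by omega), if_neg (by omega)]
      have e : i + 1 - m' = (i - m') + 1 := by omega
      rw [e]
      exact hg2arc _ (by omega))
  have e0 : (if (0:ℕ) ≤ m' then g1 0 else g2 (0 - m')) = a := by
    rw [if_pos (Nat.zero_le _), hg10]
  have e1 : (if m' + n' ≤ m' then g1 (m'+n') else g2 (m'+n'-m')) = c := by
    rcases Nat.eq_zero_or_pos n' with h | h
    · subst h
      rw [if_pos (by omega)]
      show g1 m' = c
      rw [hg1e, ← hg20]
      exact hg2e
    · rw [if_neg (by omega)]
      have e : m' + n' - m' = n' := by omega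
      rw [e, hg2e]
  beta_reduce at h
  rw [e0, e1] at h
  exact h.trans (by exact_mod_cast (by omega : m' + n' ≤ m + n))

lemma cons_path (A : V → V → Prop) (g : ℕ → V) (n : ℕ) (a : V)
    (harc : ∀ i < n, A (g i) (g (i+1)))
    (hinj : ∀ i ≤ n, ∀ j ≤ n, g i = g j → i = j)
    (ha : A a (g 0)) (hna : ∀ i ≤ n, g i ≠ a) :
    HasPathN A a (g n) (n + 1) := by
  have key := hasPathN_of_fn A (fun s => if s = 0 then a else g (s - 1)) (n+1) (by
    intro i hi
    rcases eq_or_ne i 0 with rfl | h0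
    · show A (if (0:ℕ) = 0 then a else _) (if (1:ℕ) = 0 then a else g (1-1))
      rw [if_pos rfl, if_neg one_ne_zero]
      exact ha
    · show A (if i = 0 then a else g (i-1)) (if i+1 = 0 then a else g (i+1-1))
      rw [if_neg h0, if_neg (by omega)]
      have e : i + 1 - 1 = (i - 1) + 1 := by omega
      rw [e]
      exact harc _ (by omega))
    (by
      intro i hi j hj he
      beta_reduce at he
      by_cases h1 : i = 0 <;> by_cases h2 : j = 0
      · omega
      · subst h1
        rw [if_pos rfl, if_neg h2] at he
        exact absurd he.symm (hna (j-1) (by omega))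
      · subst h2
        rw [if_neg h1, if_pos rfl] at he
        exact absurd he (hna (i-1) (by omega))
      · rw [if_neg h1, if_neg h2] at he
        have := hinj (i-1) (by omega) (j-1) (by omega) he
        omega)
  have e0 : (if (0:ℕ) = 0 then a else g (0-1)) = a := by rw [if_pos rfl]
  have e1 : (if n+1 = 0 then a else g (n+1-1)) = g n := by
    rw [if_neg (by omega)]
    simp
  beta_reduce at key
  rw [e0, e1] at key
  exact key

lemma seg2 (A : V → V → Prop) (p q : ℕ → V) (np nq : ℕ)
    (hp : ∀ i < np, A (p i) (p (i+1))) (hq : ∀ i < nq, A (q i) (q (i+1)))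
    (hbr : A (p np) (q 0))
    (hpinj : ∀ i ≤ np, ∀ j ≤ np, p i = p j → i = j)
    (hqinj : ∀ i ≤ nq, ∀ j ≤ nq, q i = q j → i = j)
    (hcross : ∀ i ≤ np, ∀ j ≤ nq, p i ≠ q j) :
    ∃ g : ℕ → V, g 0 = p 0 ∧ g (np + nq + 1) = q nq ∧
      (∀ i < np + nq + 1, A (g i) (g (i+1))) ∧
      (∀ i ≤ np + nq + 1, ∀ j ≤ np + nq + 1, g i = g j → i = j) ∧
      (∀ i ≤ np + nq + 1, (∃ t ≤ np, g i = p t) ∨ (∃ t ≤ nq, g i = q t)) := by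
  refine ⟨fun s => if s ≤ np then p s else q (s - (np+1)), ?_, ?_, ?_, ?_, ?_⟩
  · show (if (0:ℕ) ≤ np then p 0 else _) = p 0
    rw [if_pos (Nat.zero_le _)]
  · show (if np + nq + 1 ≤ np then _ else q (np+nq+1 - (np+1))) = q nq
    rw [if_neg (by omega)]
    congr 1
    omega
  · intro i hi
    rcases lt_trichotomy i np with h | h | h
    · show A (if i ≤ np then p i else _) (if i+1 ≤ np then p (i+1) else _)
      rw [if_pos (by omega), if_pos (by omega)]
      exact hp i h
    · subst h
      show A (if i ≤ i then p i else _) (if i+1 ≤ i then _ else q (i+1-(i+1)))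
      rw [if_pos le_rfl, if_neg (by omega)]
      have e : i + 1 - (i+1) = 0 := by omega
      rw [e]
      exact hbr
    · show A (if i ≤ np then _ else q (i - (np+1))) (if i+1 ≤ np then _ else q (i+1-(np+1)))
      rw [if_neg (by omega), if_neg (by omega)]
      have e : i + 1 - (np+1) = (i - (np+1)) + 1 := by omega
      rw [e]
      exact hq _ (by omega)
  · intro i hi j hj he
    beta_reduce at he
    by_cases h1 : i ≤ np <;> by_cases h2 : j ≤ np
    · rw [if_pos h1, if_pos h2] at he
      exact hpinj i h1 j h2 he
    · rw [if_pos h1, if_neg h2] at he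
      exact absurd he (hcross i h1 _ (by omega))
    · rw [if_neg h1, if_pos h2] at he
      exact absurd he.symm (hcross j h2 _ (by omega))
    · rw [if_neg h1, if_neg h2] at he
      have := hqinj (i - (np+1)) (by omega) (j - (np+1)) (by omega) he
      omega
  · intro i hi
    by_cases h : i ≤ np
    · exact Or.inl ⟨i, h, by beta_reduce; rw [if_pos h]⟩
    · exact Or.inr ⟨i - (np+1), by omega, by beta_reduce; rw [if_neg h]⟩

end Infra

lemma kqt_main (A : V → V → Prop) (k : ℕ) (hk : 3 ≤ k) (hko : Odd k)
    (hqt : KQuasiTrans A k) (v u : V)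
    (hd : ddist A v u = ((k + 2 : ℕ) : ℕ∞)) :
    ∀ (w : V) (m : ℕ), ddist A v w = (m : ℕ∞) → m ≤ k + 2 →
      ddist A u w ≤ ((max 3 (m + 2 - k) : ℕ) : ℕ∞) := by
  have hk2 : k % 2 = 1 := Nat.odd_iff.mp hko
  obtain ⟨y, hy0, hyl, hyarc, hyinj⟩ := fn_of_hasPathN (ddist_spec A hd)
  have hshort : ∀ n : ℕ, n ≤ k + 1 → ddist A v u ≤ (n : ℕ∞) → False := by
    intro n hn h1
    rw [hd] at h1
    have : k + 2 ≤ n := by exact_mod_cast h1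
    omega
  have hyseg := ddist_seg A y (k+2) hyarc
  have huy : ∀ t, t ≤ k+1 → y t ≠ u := by
    intro t ht he
    have := hyinj t (by omega) (k+2) le_rfl (he.trans hyl.symm)
    omega
  have hay : A (y k) (y 0) := by
    have hp : HasPathN A (y 0) (y k) k :=
      hasPathN_of_fn A y k (fun i hi => hyarc i (by omega))
        (fun i hi i' hi' he => hyinj i (by omega) i' (by omega) he)
    rcases hqt _ _ hp with h | h
    · exfalso
      have h2 := ddist_trans A (ddist_le_one A h) (hyseg k (k+2) (by omega) le_rfl)
      rw [hy0, hyl] at h2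
      exact hshort _ (by omega) h2
    · exact h
  have hby : A u (y 2) := by
    have hp : HasPathN A (y 2) (y (2+k)) k :=
      hasPathN_of_fn A (fun s => y (2+s)) k
        (fun i hi => by
          show A (y (2+i)) (y (2+(i+1)))
          have e : 2+(i+1) = (2+i)+1 := by omega
          rw [e]; exact hyarc _ (by omega))
        (fun i hi i' hi' he => by
          have := hyinj (2+i) (by omega) (2+i') (by omega) he
          omega)
    have e : 2 + k = k + 2 := by omega
    rw [e, hyl] at hp
    rcases hqt _ _ hp with h | h
    · exfalso
      have h2 := ddist_trans A (hyseg 0 2 (by omega) (by omega)) (ddist_le_one A h)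
      rw [hy0] at h2
      exact hshort _ (by omega) h2
    · exact h
  have hstep : ∀ j, 2 ≤ j → j ≤ k → A u (y j) → A u (y (j - 2)) := by
    intro j hj2 hjk hj
    obtain ⟨g, hg0, hgN, hgarc, hginj, hgmem⟩ :=
      seg2 A (fun s => y (j + s)) (fun s => y s) (k - j) (j - 2)
        (fun i hi => by
          show A (y (j+i)) (y (j+(i+1)))
          have e : j+(i+1) = (j+i)+1 := by omega
          rw [e]; exact hyarc _ (by omega))
        (fun i hi => hyarc i (by omega))
        (by
          show A (y (j + (k-j))) (y 0)
          have e : j + (k-j) = k := by omega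
          rw [e]; exact hay)
        (fun i hi i' hi' he => by
          have := hyinj (j+i) (by omega) (j+i') (by omega) he
          omega)
        (fun i hi i' hi' he => hyinj i (by omega) i' (by omega) he)
        (fun i hi i' hi' he => by
          have := hyinj (j+i) (by omega) i' (by omega) he
          omega)
    have hcons := cons_path A g ((k-j)+(j-2)+1) u hgarc hginj
      (by
        rw [hg0]
        show A u (y (j+0))
        rw [Nat.add_zero]
        exact hj)
      (by
        intro i hi
        rcases hgmem i hi with ⟨t, ht, he⟩ | ⟨t, ht, he⟩
        · rw [he]; exact huy (j+t) (by omega)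
        · rw [he]; exact huy t (by omega))
    rw [hgN] at hcons
    have hNk : (k-j)+(j-2)+1+1 = k := by omega
    rw [hNk] at hcons
    rcases hqt _ _ hcons with h | h
    · exact h
    · exfalso
      have h2 := ddist_trans A (hyseg 0 (j-2) (by omega) (by omega)) (ddist_le_one A h)
      rw [hy0] at h2
      exact hshort _ (by omega) h2
  have hA0 : A u (y 0) := by
    have := hstep 2 le_rfl (by omega) hby
    simpa using this
  have hA1 : A u (y (k-1)) := by
    have hcons := cons_path A y (k-1) u (fun i hi => hyarc i (by omega))
      (fun i hi i' hi' he => hyinj i (by omega) i' (by omega) he)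
      hA0
      (fun i hi => huy i (by omega))
    have e : k - 1 + 1 = k := by omega
    rw [e] at hcons
    rcases hqt _ _ hcons with h | h
    · exact h
    · exfalso
      have h2 := ddist_trans A (hyseg 0 (k-1) (by omega) (by omega)) (ddist_le_one A h)
      rw [hy0] at h2
      exact hshort _ (by omega) h2
  have hev : ∀ t : ℕ, 2*t+1 ≤ k → A u (y (k-1-2*t)) := by
    intro t
    induction t with
    | zero => intro h; simpa using hA1
    | succ t IH =>
      intro h
      have h1 := IH (by omega)
      have h2 := hstep (k-1-2*t) (by omega) (by omega) h1
      have e : k-1-2*t-2 = k-1-2*(t+1) := by omega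
      rwa [e] at h2
  have heven : ∀ e, e ≤ k - 1 → e % 2 = 0 → A u (y e) := by
    intro e he hp
    have h1 := hev ((k-1-e)/2) (by omega)
    have e2 : k-1-2*((k-1-e)/2) = e := by omega
    rwa [e2] at h1
  have huv : A u v := by
    have := heven 0 (by omega) (by omega)
    rwa [hy0] at this
  -- now fix w
  intro w m hdw hm
  obtain ⟨x, hx0, hxm, hxarc, hxinj⟩ := fn_of_hasPathN (ddist_spec A hdw)
  have hxseg := ddist_seg A x m hxarc
  have hwmin : ∀ L : ℕ, ddist A v w ≤ (L:ℕ∞) → m ≤ L := by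
    intro L hL
    rw [hdw] at hL
    exact_mod_cast hL
  have hyx : ∀ t, t ≤ k+2 → ∀ i, i ≤ m → y t = x i → t = i := by
    intro t ht i hi he
    rcases lt_trichotomy t i with h | h | h
    · exfalso
      have h1 := hyseg 0 t (by omega) (by omega)
      rw [hy0, he] at h1
      have h2 := ddist_trans A h1 (hxseg i m hi le_rfl)
      rw [hxm] at h2
      have := hwmin _ h2
      omega
    · exact h
    · exfalso
      have h1 := hxseg 0 i (by omega) hi
      rw [hx0, ← he] at h1
      have h2 := ddist_trans A h1 (hyseg t (k+2) (by omega) le_rfl)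
      rw [hyl] at h2
      exact hshort _ (by omega) h2
  have hux : ∀ i, i ≤ m → i < k+2 → x i ≠ u := by
    intro i him hik he
    have := hyx (k+2) le_rfl i him (by rw [hyl, he])
    omega
  have hE : ∀ j, j + 3 ≤ k → j % 2 = 0 → j ≤ m → A u (x j) := by
    intro j hjk hj2 hjm
    obtain ⟨g, hg0, hgN, hgarc, hginj, hgmem⟩ :=
      seg2 A (fun s => y (j+2+s)) x (k-j-2) j
        (fun i hi => by
          show A (y (j+2+i)) (y (j+2+(i+1)))
          have e : j+2+(i+1) = (j+2+i)+1 := by omega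
          rw [e]; exact hyarc _ (by omega))
        (fun i hi => hxarc i (by omega))
        (by
          show A (y (j+2+(k-j-2))) (x 0)
          have e : j+2+(k-j-2) = k := by omega
          have e2 : x 0 = y 0 := by rw [hx0, hy0]
          rw [e, e2]
          exact hay)
        (fun i hi i' hi' he => by
          have := hyinj (j+2+i) (by omega) (j+2+i') (by omega) he
          omega)
        (fun i hi i' hi' he => hxinj i (by omega) i' (by omega) he)
        (fun i hi i' hi' he => by
          have := hyx (j+2+i) (by omega) i' (by omega) he
          omega)
    have hcons := cons_path A g ((k-j-2)+j+1) u hgarc hginj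
      (by
        rw [hg0]
        show A u (y (j+2+0))
        rw [Nat.add_zero]
        exact heven (j+2) (by omega) (by omega))
      (by
        intro i hi
        rcases hgmem i hi with ⟨t, ht, he⟩ | ⟨t, ht, he⟩
        · rw [he]; exact huy (j+2+t) (by omega)
        · rw [he]; exact hux t (by omega) (by omega))
    rw [hgN] at hcons
    have e : (k-j-2)+j+1+1 = k := by omega
    rw [e] at hcons
    rcases hqt _ _ hcons with h | h
    · exact h
    · exfalso
      have h2 := ddist_trans A (hxseg 0 j (by omega) (by omega)) (ddist_le_one A h)
      rw [hx0] at h2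
      exact hshort _ (by omega) h2
  have hC : k - 1 ≤ m → A u (x (k-1)) := by
    intro hkm
    have hcons := cons_path A x (k-1) u (fun i hi => hxarc i (by omega))
      (fun i hi i' hi' he => hxinj i (by omega) i' (by omega) he)
      (by rw [hx0]; exact huv)
      (fun i hi => hux i (by omega) (by omega))
    have e : k - 1 + 1 = k := by omega
    rw [e] at hcons
    rcases hqt _ _ hcons with h | h
    · exact h
    · exfalso
      have h2 := ddist_trans A (hxseg 0 (k-1) (by omega) hkm) (ddist_le_one A h)
      rw [hx0] at h2
      exact hshort _ (by omega) h2
  -- final case analysis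
  rcases Nat.lt_or_ge m 3 with hm3 | hm3
  · have hseg := hxseg 0 m (by omega) le_rfl
    rw [hx0] at hseg
    have h2 := ddist_trans A (ddist_le_one A huv) hseg
    rw [hxm] at h2
    exact h2.trans (by exact_mod_cast (by omega : 1 + (m - 0) ≤ max 3 (m+2-k)))
  rcases Nat.lt_or_ge m (k-1) with hmk | hmk
  · by_cases hme : m % 2 = 0
    · have h := hE m (by omega) hme le_rfl
      have h1 : ddist A u (x m) ≤ ((1:ℕ):ℕ∞) := ddist_le_one A h
      rw [hxm] at h1
      exact h1.trans (by exact_mod_cast (by omega : 1 ≤ max 3 (m+2-k)))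
    · have h := hE (m-1) (by omega) (by omega) (by omega)
      have h1 := ddist_trans A (ddist_le_one A h) (hxseg (m-1) m (by omega) le_rfl)
      rw [hxm] at h1
      exact h1.trans (by exact_mod_cast (by omega : 1 + (m-(m-1)) ≤ max 3 (m+2-k)))
  · have h := hC hmk
    have h1 := ddist_trans A (ddist_le_one A h) (hxseg (k-1) m hmk le_rfl)
    rw [hxm] at h1
    exact h1.trans (by exact_mod_cast (by omega : 1 + (m-(k-1)) ≤ max 3 (m+2-k)))


/-- odd `k ≥ 3`; if `v` is a `(k+2)`-king and `d(v,u) = k+2`, then `u` is a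
`4`-king; moreover every `w` with `d(u,w) = 4` satisfies `d(v,w) = k+2` and is a `4`-king. -/
theorem kqt_odd_far_vertex_four_king
    [Fintype V] (A : V → V → Prop) (hloop : ∀ v : V, ¬ A v v)
    (k : ℕ) (hk : 3 ≤ k) (hko : Odd k) (hqt : KQuasiTrans A k)
    (v u : V) (hv : IsRKing A (k + 2) v) (hd : ddist A v u = ((k : ℕ∞) + 2)) :
    IsRKing A 4 u ∧
      ∀ w : V, ddist A u w = (4 : ℕ∞) →
        ddist A v w = ((k : ℕ∞) + 2) ∧ IsRKing A 4 w := by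

  have hd' : ddist A v u = ((k + 2 : ℕ) : ℕ∞) := by rw [hd]; push_cast; ring
  have king4 : ∀ z : V, ddist A v z = ((k+2:ℕ):ℕ∞) → IsRKing A 4 z := by
    intro z hz t
    have hvt := hv t
    obtain ⟨m, hm, he⟩ := exists_dist_of_le A hvt
    have h := kqt_main A k hk hko hqt v z hz t m he hm
    refine h.trans ?_
    exact_mod_cast (by omega : max 3 (m+2-k) ≤ 4)
  constructor
  · exact king4 u hd'
  · intro w hw
    have hvw := hv w
    obtain ⟨m, hm, he⟩ := exists_dist_of_le A hvw
    have hmk : m = k + 2 := by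
      by_contra hne
      have h3 := kqt_main A k hk hko hqt v u hd' w m he hm
      have h4 : ddist A u w ≤ ((3:ℕ) : ℕ∞) :=
        h3.trans (by exact_mod_cast (by omega : max 3 (m+2-k) ≤ 3))
      rw [hw] at h4
      have : (4:ℕ) ≤ 3 := by exact_mod_cast h4
      omega
    constructor
    · rw [he, hmk]; push_cast; ring
    · exact king4 w (by rw [he, hmk])
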